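/- Define operators on S(ℝ × ℤ/c) (c ≠ 0, θ irrational, ad−bc = 1) by (fU₁)(t,α) = e^{2πi(t − αd/c)}·f(t,α), (fU₂)(t,α) = f(t − (cθ+d)/c, α−1), (V₁f)(t,α) = e^{2πi(t/(cθ+d) − α/c)}·f(t,α), (V₂f)(t,α) = f(t − 1/c, α−a). Then U₂U₁ = e^{2πiθ}U₁U₂ (as right actions), V₂V₁ = e^{2πiθ'}V₁V₂ with θ' = (aθ+b)/(cθ+d), and every V_i commutes with every U_j (the left A_{θ'}-action commutes with the right A_θ-action). -/

import Mathlib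

open Complex

/-- Right action of the generator `U₁`: `(fU₁)(t,α) = e^{2πi(t − αd/c)}·f(t,α)`. -/
noncomputable def heisU1 (c d : ℤ) (f : ℝ × ZMod c.natAbs → ℂ) : ℝ × ZMod c.natAbs → ℂ :=
  fun p => Complex.exp (2 * Real.pi * Complex.I *
      ((p.1 - ((p.2.val : ℝ) * (d : ℝ)) / (c : ℝ) : ℝ) : ℂ)) * f p

/-- Right action of the generator `U₂`: `(fU₂)(t,α) = f(t − (cθ+d)/c, α−1)`. -/
noncomputable def heisU2 (c d : ℤ) (θ : ℝ) (f : ℝ × ZMod c.natAbs → ℂ) :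
    ℝ × ZMod c.natAbs → ℂ :=
  fun p => f (p.1 - ((c : ℝ) * θ + (d : ℝ)) / (c : ℝ), p.2 - 1)

/-- Left action of the generator `V₁`: `(V₁f)(t,α) = e^{2πi(t/(cθ+d) − α/c)}·f(t,α)`. -/
noncomputable def heisV1 (c d : ℤ) (θ : ℝ) (f : ℝ × ZMod c.natAbs → ℂ) :
    ℝ × ZMod c.natAbs → ℂ :=
  fun p => Complex.exp (2 * Real.pi * Complex.I *
      ((p.1 / ((c : ℝ) * θ + (d : ℝ)) - (p.2.val : ℝ) / (c : ℝ) : ℝ) : ℂ)) * f p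

/-- Left action of the generator `V₂`: `(V₂f)(t,α) = f(t − 1/c, α−a)`. -/
noncomputable def heisV2 (a c : ℤ) (f : ℝ × ZMod c.natAbs → ℂ) : ℝ × ZMod c.natAbs → ℂ :=
  fun p => f (p.1 - 1 / (c : ℝ), p.2 - (a : ZMod c.natAbs))

/-- Key arithmetic fact: `(x - z).val ≡ x.val - z` modulo `c`. -/
lemma heis_val_sub (c : ℤ) (hc : c ≠ 0) (x : ZMod c.natAbs) (z : ℤ) :
    ∃ k : ℤ, (((x - (z : ZMod c.natAbs)).val : ℤ)) = (x.val : ℤ) - z + k * c := by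
  haveI : NeZero c.natAbs := ⟨Int.natAbs_ne_zero.mpr hc⟩
  have h : (c : ℤ) ∣ (((x - (z : ZMod c.natAbs)).val : ℤ) - ((x.val : ℤ) - z)) := by
    rw [← Int.natAbs_dvd]
    apply (ZMod.intCast_zmod_eq_zero_iff_dvd _ _).mp
    push_cast
    simp [ZMod.natCast_val, ZMod.cast_id]
  obtain ⟨k, hk⟩ := h
  exact ⟨k, by linarith⟩

lemma heis_exp_aux (s u r : ℝ) (m : ℤ) (Z : ℂ) (h : s = u + r + m) :
    Complex.exp (2 * Real.pi * Complex.I * (s : ℂ)) * Z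
      = Complex.exp (2 * Real.pi * Complex.I * (u : ℂ)) *
        (Complex.exp (2 * Real.pi * Complex.I * (r : ℂ)) * Z) := by
  rw [← mul_assoc, ← Complex.exp_add]
  congr 1
  rw [Complex.exp_eq_exp_iff_exists_int]
  exact ⟨m, by rw [h]; push_cast; ring⟩

lemma heis_exp_aux0 (s r : ℝ) (m : ℤ) (Z : ℂ) (h : s = r + m) :
    Complex.exp (2 * Real.pi * Complex.I * (s : ℂ)) * Z
      = Complex.exp (2 * Real.pi * Complex.I * (r : ℂ)) * Z := by
  congr 1
  rw [Complex.exp_eq_exp_iff_exists_int]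
  exact ⟨m, by rw [h]; push_cast; ring⟩

/-- On the Heisenberg bimodule `S(ℝ × ℤ/c)`: the right actions satisfy
`U₂U₁ = e^{2πiθ}U₁U₂`, the left actions satisfy `V₂V₁ = e^{2πiθ'}V₁V₂` with
`θ' = (aθ+b)/(cθ+d)`, and each `V_i` commutes with each `U_j`. -/
theorem heisenberg_bimodule_relations (a b c d : ℤ) (hc : c ≠ 0)
    (hdet : a * d - b * c = 1) (θ : ℝ) (hθ : Irrational θ) :
    (∀ f : ℝ × ZMod c.natAbs → ℂ,
        heisU1 c d (heisU2 c d θ f)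
          = fun p => Complex.exp (2 * Real.pi * Complex.I * (θ : ℂ)) *
              heisU2 c d θ (heisU1 c d f) p)
    ∧ (∀ f : ℝ × ZMod c.natAbs → ℂ,
        heisV2 a c (heisV1 c d θ f)
          = fun p => Complex.exp (2 * Real.pi * Complex.I *
                ((((a : ℝ) * θ + (b : ℝ)) / ((c : ℝ) * θ + (d : ℝ)) : ℝ) : ℂ)) *
              heisV1 c d θ (heisV2 a c f) p)
    ∧ (∀ f : ℝ × ZMod c.natAbs → ℂ, heisV1 c d θ (heisU1 c d f) = heisU1 c d (heisV1 c d θ f))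
    ∧ (∀ f : ℝ × ZMod c.natAbs → ℂ, heisV1 c d θ (heisU2 c d θ f) = heisU2 c d θ (heisV1 c d θ f))
    ∧ (∀ f : ℝ × ZMod c.natAbs → ℂ, heisV2 a c (heisU1 c d f) = heisU1 c d (heisV2 a c f))
    ∧ (∀ f : ℝ × ZMod c.natAbs → ℂ, heisV2 a c (heisU2 c d θ f) = heisU2 c d θ (heisV2 a c f)) := by
  have hc' : (c : ℝ) ≠ 0 := Int.cast_ne_zero.mpr hc
  have hcd : (c : ℝ) * θ + (d : ℝ) ≠ 0 := by
    intro h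
    exact hθ ⟨(-d : ℚ) / (c : ℚ), by
      push_cast
      field_simp
      linarith⟩
  have hdetR : (a : ℝ) * d - (b : ℝ) * c = 1 := by exact_mod_cast hdet
  refine ⟨?_, ?_, ?_, ?_, ?_, ?_⟩
  · -- U₂U₁ = e^{2πiθ} U₁U₂
    intro f
    funext p
    obtain ⟨k, hk⟩ := heis_val_sub c hc p.2 1
    have hkR : (((p.2 - ((1 : ℤ) : ZMod c.natAbs)).val : ℝ)) = (p.2.val : ℝ) - 1 + k * c := by
      exact_mod_cast hk
    simp only [Int.cast_one] at hkR
    simp only [heisU1, heisU2]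
    exact heis_exp_aux _ _ _ (d * k) _ (by push_cast; field_simp; linear_combination (d : ℝ) * hkR)
  · -- V₂V₁ = e^{2πiθ'} V₁V₂
    intro f
    funext p
    obtain ⟨k, hk⟩ := heis_val_sub c hc p.2 a
    have hkR : (((p.2 - ((a : ℤ) : ZMod c.natAbs)).val : ℝ)) = (p.2.val : ℝ) - a + k * c := by
      exact_mod_cast hk
    simp only [heisV1, heisV2]
    have hu : ((a : ℝ) * θ + b) / ((c : ℝ) * θ + d)
        = (a : ℝ) / c - 1 / ((c : ℝ) * ((c : ℝ) * θ + d)) := by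
      rw [eq_sub_iff_add_eq, div_add_div _ _ hcd (mul_ne_zero hc' hcd),
        div_eq_div_iff (mul_ne_zero hcd (mul_ne_zero hc' hcd)) hc']
      linear_combination (-(c : ℝ) * ((c : ℝ) * θ + (d : ℝ))) * hdetR
    exact heis_exp_aux _ _ _ (-k) _ (by push_cast; rw [hkR, hu]; field_simp; ring)
  · -- V₁ U₁ = U₁ V₁
    intro f
    funext p
    simp only [heisU1, heisV1]
    ring
  · -- V₁ U₂ = U₂ V₁
    intro f
    funext p
    obtain ⟨k, hk⟩ := heis_val_sub c hc p.2 1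
    have hkR : (((p.2 - ((1 : ℤ) : ZMod c.natAbs)).val : ℝ)) = (p.2.val : ℝ) - 1 + k * c := by
      exact_mod_cast hk
    simp only [Int.cast_one] at hkR
    simp only [heisU2, heisV1]
    exact heis_exp_aux0 _ _ k _ (by rw [hkR]; field_simp; ring)
  · -- V₂ U₁ = U₁ V₂
    intro f
    funext p
    obtain ⟨k, hk⟩ := heis_val_sub c hc p.2 a
    have hkR : (((p.2 - ((a : ℤ) : ZMod c.natAbs)).val : ℝ)) = (p.2.val : ℝ) - a + k * c := by
      exact_mod_cast hk
    simp only [heisU1, heisV2]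
    exact heis_exp_aux0 _ _ (b - d * k) _ (by
      push_cast
      rw [hkR]
      field_simp
      linear_combination hdetR)
  · -- V₂ U₂ = U₂ V₂
    intro f
    funext p
    simp only [heisU2, heisV2]
    congr 1
    exact Prod.ext (by ring) (by ring)
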